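/- Let F be a finite field of odd characteristic, q a nondegenerate quadratic form on Fⁿ, ψ a nontrivial additive character of F, and φ the quadratic character. Then ∑_{x ∈ Fⁿ} ψ(q(x)) = φ(discr q) · (-g(φ))ⁿ, where discr q is the discriminant of q and g(φ) is the Gauss sum. -/

import Mathlib

open Finset Matrix

section Aux

variable {F : Type*} [Field F] [Fintype F] [DecidableEq F]

lemma phi_val_sq (φ : MulChar F ℂ) (hφ2 : φ ^ 2 = 1) {a : F} (ha : a ≠ 0) :
    φ a ^ 2 = 1 := by
  rw [← MulChar.pow_apply' φ two_ne_zero, hφ2, MulChar.one_apply (isUnit_iff_ne_zero.mpr ha)]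

lemma phi_square_eq_one (φ : MulChar F ℂ) (hφ2 : φ ^ 2 = 1) {b : F} (hb : b ≠ 0)
    (hs : IsSquare b) : φ b = 1 := by
  obtain ⟨c, hc⟩ := hs
  have hc0 : c ≠ 0 := by rintro rfl; rw [mul_zero] at hc; exact hb hc
  rw [hc, _root_.map_mul, ← sq, phi_val_sq φ hφ2 hc0]

lemma phi_eq_quadChar (hF : ringChar F ≠ 2) (φ : MulChar F ℂ) (hφ2 : φ ^ 2 = 1)
    (hφ1 : φ ≠ 1) (a : F) : φ a = ((quadraticChar F a : ℤ) : ℂ) := by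
  by_cases ha : a = 0
  · subst ha
    rw [MulChar.map_nonunit φ (by simp), quadraticChar_zero]
    norm_num
  · by_cases hs : IsSquare a
    · rw [(quadraticChar_one_iff_isSquare ha).mpr hs, phi_square_eq_one φ hφ2 ha hs]
      norm_num
    · rw [quadraticChar_neg_one_iff_not_isSquare.mpr hs]
      have h2 : φ a ^ 2 = 1 := phi_val_sq φ hφ2 ha
      have hfac : (φ a - 1) * (φ a + 1) = 0 := by linear_combination h2
      rcases mul_eq_zero.mp hfac with h1 | h1
      · -- φ a = 1 leads to φ = 1, contradiction
        exfalso
        have hφa : φ a = 1 := sub_eq_zero.mp h1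
        apply hφ1
        ext x
        have hx0 : (x : F) ≠ 0 := x.ne_zero
        rw [MulChar.one_apply_coe]
        by_cases hxs : IsSquare (x : F)
        · exact phi_square_eq_one φ hφ2 hx0 hxs
        · -- x * a⁻¹ is a square
          have hainv : quadraticChar F a⁻¹ = -1 := by
            have h := _root_.map_mul (quadraticChar F) a a⁻¹
            rw [mul_inv_cancel₀ ha, _root_.map_one,
              quadraticChar_neg_one_iff_not_isSquare.mpr hs] at h
            linarith
          have hxa0 : (x : F) * a⁻¹ ≠ 0 := mul_ne_zero hx0 (inv_ne_zero ha)
          have hxa : IsSquare ((x : F) * a⁻¹) := by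
            apply (quadraticChar_one_iff_isSquare hxa0).mp
            rw [_root_.map_mul, hainv, quadraticChar_neg_one_iff_not_isSquare.mpr hxs]
            ring
          have hx' : φ (x : F) = φ ((x : F) * a⁻¹) * φ a := by
            rw [← _root_.map_mul, mul_assoc, inv_mul_cancel₀ ha, mul_one]
          rw [hx', phi_square_eq_one φ hφ2 hxa0 hxa, hφa, mul_one]
      · -- φ a = -1
        have : φ a = -1 := eq_neg_of_add_eq_zero_left h1
        rw [this]; norm_num

lemma sum_psi_mul_sq (hF : ringChar F ≠ 2) (ψ : AddChar F ℂ) (hψ : ψ ≠ 1)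
    (φ : MulChar F ℂ) (hφ2 : φ ^ 2 = 1) (hφ1 : φ ≠ 1) {a : F} (ha : a ≠ 0) :
    ∑ x : F, ψ (a * x ^ 2) = φ a * gaussSum φ ψ := by
  have hfib : ∑ x : F, ψ (a * x ^ 2)
      = ∑ t : F, ∑ x ∈ univ.filter (fun x => x ^ 2 = t), ψ (a * x ^ 2) :=
    (Finset.sum_fiberwise univ (fun x => x ^ 2) (fun x => ψ (a * x ^ 2))).symm
  have hinner : ∀ t : F, ∑ x ∈ univ.filter (fun x => x ^ 2 = t), ψ (a * x ^ 2)
      = (φ t + 1) * ψ (a * t) := by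
    intro t
    have h1 : ∑ x ∈ univ.filter (fun x => x ^ 2 = t), ψ (a * x ^ 2)
        = ∑ _x ∈ univ.filter (fun x => x ^ 2 = t), ψ (a * t) := by
      refine Finset.sum_congr rfl fun x hx => ?_
      rw [(Finset.mem_filter.mp hx).2]
    rw [h1, Finset.sum_const, nsmul_eq_mul]
    congr 1
    have hcard := quadraticChar_card_sqrts hF t
    rw [Set.toFinset_setOf] at hcard
    rw [phi_eq_quadChar hF φ hφ2 hφ1 t]
    exact_mod_cast hcard
  have hzero : ∑ t : F, ψ (a * t) = 0 := by
    have hne : ψ.mulShift a ≠ 0 := by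
      intro h0
      apply hψ
      ext x
      have := DFunLike.congr_fun h0 (a⁻¹ * x)
      rw [AddChar.mulShift_apply, ← mul_assoc, mul_inv_cancel₀ ha, one_mul,
        AddChar.zero_apply] at this
      rw [this, AddChar.one_apply]
    simpa only [AddChar.mulShift_apply] using
      (AddChar.sum_eq_zero_iff_ne_zero.mpr hne)
  have hgs : ∑ t : F, φ t * ψ (a * t) = φ a * gaussSum φ ψ := by
    have h := gaussSum_mulShift φ ψ (Units.mk0 a ha)
    have hgs' : gaussSum φ (ψ.mulShift a) = ∑ t : F, φ t * ψ (a * t) := by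
      simp [gaussSum, AddChar.mulShift_apply]
    have hφa2 : φ a * φ a = 1 := by
      have := phi_val_sq φ hφ2 ha; rwa [sq] at this
    rw [Units.val_mk0, hgs'] at h
    calc ∑ t : F, φ t * ψ (a * t) = (φ a * φ a) * ∑ t : F, φ t * ψ (a * t) := by
          rw [hφa2, one_mul]
      _ = φ a * (φ a * ∑ t : F, φ t * ψ (a * t)) := by ring
      _ = φ a * gaussSum φ ψ := by rw [h]
  calc ∑ x : F, ψ (a * x ^ 2)
      = ∑ t : F, (φ t + 1) * ψ (a * t) := by rw [hfib]; exact Finset.sum_congr rfl fun t _ => hinner t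
    _ = (∑ t : F, φ t * ψ (a * t)) + ∑ t : F, ψ (a * t) := by
        rw [← Finset.sum_add_distrib]; exact Finset.sum_congr rfl fun t _ => by ring
    _ = φ a * gaussSum φ ψ := by rw [hzero, hgs, add_zero]

lemma addChar_map_sum {ι : Type*} (ψ : AddChar F ℂ) (s : Finset ι) (f : ι → F) :
    ψ (∑ i ∈ s, f i) = ∏ i ∈ s, ψ (f i) := by
  classical
  induction s using Finset.induction_on with
  | empty => simp
  | insert _ _ h ih => rw [Finset.sum_insert h, Finset.prod_insert h, AddChar.map_add_eq_mul, ih]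

end Aux

/-- For a nondegenerate quadratic form `q(x) = xᵀ M x` (with `M` a symmetric
matrix of nonzero determinant) over a finite field of odd characteristic, a nontrivial
additive character `ψ` and the quadratic character `φ`,
`∑_{x ∈ Fⁿ} ψ(q(x)) = φ(discr q) · (-g(φ))ⁿ`, where `-g(φ) = gaussSum φ ψ`. -/
theorem sum_psi_quadratic_form {F : Type*} [Field F] [Fintype F]
    (hF : ringChar F ≠ 2) {n : ℕ}
    (M : Matrix (Fin n) (Fin n) F) (hsym : M.IsSymm) (hdet : M.det ≠ 0)
    (ψ : AddChar F ℂ) (hψ : ψ ≠ 1)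
    (φ : MulChar F ℂ) (hφ2 : φ ^ 2 = 1) (hφ1 : φ ≠ 1) :
    ∑ x : Fin n → F, ψ (dotProduct x (M.mulVec x))
      = φ M.det * (gaussSum φ ψ) ^ n := by
  classical
  haveI : Invertible (2 : F) := invertibleOfNonzero (Ring.two_ne_zero hF)
  set B : LinearMap.BilinForm F (Fin n → F) := Matrix.toLinearMap₂' F M with hB
  have hBapp : ∀ x y : Fin n → F, B x y = dotProduct x (M.mulVec y) := fun x y =>
    Matrix.toLinearMap₂'_apply' M x y
  have hBsymm : LinearMap.IsSymm B := by
    refine ⟨fun x y => ?_⟩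
    rw [RingHom.id_apply, hBapp, hBapp, dotProduct_mulVec,
      ← Matrix.mulVec_transpose, hsym.eq, dotProduct_comm]
  obtain ⟨v₀, hv₀⟩ := LinearMap.BilinForm.exists_orthogonal_basis hBsymm
  have hrank : Module.finrank F (Fin n → F) = n := Module.finrank_fin_fun F
  set v : Module.Basis (Fin n) F (Fin n → F) := v₀.reindex (finCongr hrank) with hv
  have hortho : ∀ i j : Fin n, i ≠ j → B (v i) (v j) = 0 := by
    intro i j hij
    rw [hv, Module.Basis.reindex_apply, Module.Basis.reindex_apply]
    exact hv₀ (fun h => hij (by simpa using congrArg (finCongr hrank) h))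
  set w : Fin n → F := fun i => B (v i) (v i) with hw
  -- the Gram matrix of B in the basis v is diagonal w
  have hGram : LinearMap.toMatrix₂ v v B = Matrix.diagonal w := by
    ext i j
    rw [LinearMap.toMatrix₂_apply]
    by_cases hij : i = j
    · subst hij; rw [Matrix.diagonal_apply_eq]
    · rw [Matrix.diagonal_apply_ne _ hij, hortho i j hij]
  set P : Matrix (Fin n) (Fin n) F := (Pi.basisFun F (Fin n)).toMatrix ⇑v with hP
  have hchg : Pᵀ * M * P = Matrix.diagonal w := by
    have h := LinearMap.toMatrix₂_mul_basis_toMatrix (Pi.basisFun F (Fin n)) (Pi.basisFun F (Fin n)) v v B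
    rw [LinearMap.toMatrix₂_basisFun] at h
    have hM : LinearMap.toMatrix₂' F B = M := by
      rw [hB]; exact LinearMap.toMatrix'_toLinearMap₂' M
    rw [hM, hGram] at h
    exact h
  have hdetdiag : ∏ i, w i = P.det ^ 2 * M.det := by
    have := congrArg Matrix.det hchg
    rw [Matrix.det_diagonal, Matrix.det_mul, Matrix.det_mul, Matrix.det_transpose] at this
    rw [← this]; ring
  -- each w i is nonzero
  have hsep : B.SeparatingLeft := by
    rw [hB]
    exact LinearMap.separatingLeft_toLinearMap₂'_of_det_ne_zero' hdet
  have hwne : ∀ i, w i ≠ 0 := by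
    intro i hwi
    have hzero : B (v i) = 0 := by
      apply v.ext
      intro j
      rw [LinearMap.zero_apply]
      by_cases hij : i = j
      · subst hij; exact hwi
      · exact hortho i j hij
    have : v i = 0 := hsep (v i) (fun y => by rw [hzero]; rfl)
    exact v.ne_zero i this
  have hprodw : ∏ i, w i ≠ 0 := Finset.prod_ne_zero_iff.mpr fun i _ => hwne i
  have hdetP : P.det ≠ 0 := by
    intro h
    rw [h] at hdetdiag
    simp at hdetdiag
    exact hprodw hdetdiag
  -- change of variables in the sum
  have hsum1 : ∑ x : Fin n → F, ψ (dotProduct x (M.mulVec x))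
      = ∑ c : Fin n → F, ψ (B (v.equivFun.symm c) (v.equivFun.symm c)) := by
    rw [← Equiv.sum_comp v.equivFun.symm.toEquiv
      (fun x => ψ (dotProduct x (M.mulVec x)))]
    exact Finset.sum_congr rfl fun c _ => by rw [hBapp]; rfl
  have hexp : ∀ c : Fin n → F, B (v.equivFun.symm c) (v.equivFun.symm c)
      = ∑ i, w i * c i ^ 2 := by
    intro c
    rw [Module.Basis.equivFun_symm_apply]
    have key : ∀ i : Fin n, (B (v i)) (∑ j, c j • v j) = c i * w i := by
      intro i
      rw [map_sum, Finset.sum_eq_single i]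
      · rw [_root_.map_smul, smul_eq_mul]
      · intro j _ hji
        rw [_root_.map_smul, smul_eq_mul, hortho i j (Ne.symm hji), mul_zero]
      · intro h; exact absurd (Finset.mem_univ i) h
    have expand : B (∑ i, c i • v i) = ∑ i, c i • B (v i) := by
      rw [map_sum]
      exact Finset.sum_congr rfl fun i _ => by rw [_root_.map_smul]
    rw [expand, LinearMap.sum_apply]
    refine Finset.sum_congr rfl fun i _ => ?_
    rw [LinearMap.smul_apply, key i, smul_eq_mul]
    ring
  have hsum2 : ∑ c : Fin n → F, ψ (∑ i, w i * c i ^ 2)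
      = ∏ i, (φ (w i) * gaussSum φ ψ) := by
    have h1 : ∀ c : Fin n → F, ψ (∑ i, w i * c i ^ 2) = ∏ i, ψ (w i * c i ^ 2) :=
      fun c => addChar_map_sum ψ univ _
    rw [Finset.sum_congr rfl fun c _ => h1 c]
    rw [← Fintype.piFinset_univ, Finset.sum_prod_piFinset univ (fun i x => ψ (w i * x ^ 2))]
    exact Finset.prod_congr rfl fun i _ => sum_psi_mul_sq hF ψ hψ φ hφ2 hφ1 (hwne i)
  have hphiP : φ P.det ^ 2 = 1 := phi_val_sq φ hφ2 hdetP
  calc ∑ x : Fin n → F, ψ (dotProduct x (M.mulVec x))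
      = ∑ c : Fin n → F, ψ (∑ i, w i * c i ^ 2) := by
        rw [hsum1]; exact Finset.sum_congr rfl fun c _ => by rw [hexp c]
    _ = ∏ i, (φ (w i) * gaussSum φ ψ) := hsum2
    _ = (∏ i, φ (w i)) * gaussSum φ ψ ^ n := by
        rw [Finset.prod_mul_distrib, Finset.prod_const, Finset.card_univ, Fintype.card_fin]
    _ = φ (∏ i, w i) * gaussSum φ ψ ^ n := by rw [← _root_.map_prod φ w Finset.univ]
    _ = φ M.det * gaussSum φ ψ ^ n := by
        rw [hdetdiag, _root_.map_mul, _root_.map_pow, hphiP, one_mul]
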